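/- Let $\tau$ be a rational polyhedral cone with lattice $N_\tau$ and dual monoid $\tau^{\vee}\subseteq M_\tau$, let $M$ be a lattice, and let $Q_\tau : M\times M \to M_\tau$ be a symmetric bilinear form with $Q_\tau(m,m)\in\tau^{\vee}$ for all $m$. Let $\phi: M \to M_\tau$ be a group homomorphism such that for every $n \in \tau\cap N_\tau$, the element $\phi^{\vee}(n) \in N := \mathrm{Hom}(M,\mathbb{Z})$ lies in the $\mathbb{Q}$-span of $\{Q_{\tau,\mathrm{hom},N}(m)(n): m \in M\}$. Then for every $m \in M$ there exist $m_1, m_2 \in M$ such that $\phi(m) - Q_\tau(m_1,m) \in \tau^{\vee}$ and $Q_\tau(m_2,m) - \phi(m) \in \tau^{\vee}$. -/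

import Mathlib

private lemma cs_zero (a b : ℤ) (h : ∀ t : ℤ, 0 ≤ a + 2 * t * b) : b = 0 := by
  have ha := h 0
  by_contra hb
  rcases lt_or_gt_of_ne hb with h1 | h1
  · have := h (a + 1); nlinarith
  · have := h (-(a + 1)); nlinarith

private lemma nonneg_on_sat {Nτ : Type*} [AddCommGroup Nτ]
    {r : ℕ} (g : Fin r → Nτ) (τset : Set Nτ)
    (hτ : τset = {n : Nτ | ∃ k : ℕ, 0 < k ∧
      (k : ℤ) • n ∈ AddSubmonoid.closure (Set.range g)})
    (F : Module.Dual ℤ Nτ) (h : ∀ i, 0 ≤ F (g i)) :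
    ∀ n ∈ τset, 0 ≤ F n := by
  intro n hn
  rw [hτ] at hn
  obtain ⟨k, hk, hmem⟩ := hn
  have hcl : ∀ x ∈ AddSubmonoid.closure (Set.range g), 0 ≤ F x := by
    intro x hx
    induction hx using AddSubmonoid.closure_induction with
    | mem y hy => obtain ⟨i, rfl⟩ := hy; exact h i
    | zero => simp
    | add x y _ _ hx hy => rw [map_add]; positivity
  have hkn : 0 ≤ F ((k : ℤ) • n) := hcl _ hmem
  rw [map_smul, smul_eq_mul] at hkn
  have hk' : (0:ℤ) < (k:ℤ) := by exact_mod_cast hk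
  nlinarith



/-- Let `τ` be a rational polyhedral cone in the lattice `Nτ` (encoded by
a finite set of generators `g`, with `τset = τ ∩ Nτ` the saturation of the monoid they
generate), `M` a lattice, and `Qτ : M × M → Mτ = Hom(Nτ,ℤ)` a symmetric bilinear form
with `Qτ(m,m) ∈ τ^∨` for all `m`.  Let `φ : M → Mτ` be a homomorphism such that for
every `n ∈ τ ∩ Nτ`, the dual element `φ^∨(n) ∈ N = Hom(M,ℤ)` lies in the `ℚ`-span of
`{Q_{τ,hom,N}(m)(n) : m ∈ M}`.  Then for every `m ∈ M` there exist `m₁, m₂ ∈ M` with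
`Qτ(m₁,m) ≤ φ(m) ≤ Qτ(m₂,m)` in the order given by `τ^∨` (i.e. the differences are
nonnegative on `τ ∩ Nτ`). -/
theorem trop_abelian_boundedness
    {M Nτ : Type*} [AddCommGroup M] [AddCommGroup Nτ]
    {r : ℕ} (g : Fin r → Nτ)
    (τset : Set Nτ)
    (hτ : τset = {n : Nτ | ∃ k : ℕ, 0 < k ∧
      (k : ℤ) • n ∈ AddSubmonoid.closure (Set.range g)})
    (Q : M →ₗ[ℤ] M →ₗ[ℤ] Module.Dual ℤ Nτ)
    (hsymm : ∀ m m' : M, Q m m' = Q m' m)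
    (hQpos : ∀ m : M, ∀ n ∈ τset, 0 ≤ Q m m n)
    (φ : M →ₗ[ℤ] Module.Dual ℤ Nτ)
    (hspan : ∀ n ∈ τset, ∃ k : ℤ, k ≠ 0 ∧
      k • φ.flip n ∈ Submodule.span ℤ (Set.range fun m : M => (Q m).flip n)) :
    ∀ m : M, ∃ m1 m2 : M,
      (∀ n ∈ τset, Q m1 m n ≤ φ m n) ∧ (∀ n ∈ τset, φ m n ≤ Q m2 m n) := by
  intro m
  have hg : ∀ i : Fin r, g i ∈ τset := by
    intro i
    rw [hτ]
    refine ⟨1, one_pos, ?_⟩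
    simpa using AddSubmonoid.subset_closure (Set.mem_range_self i)
  -- key vanishing lemma on rays
  have key : ∀ i : Fin r, Q m m (g i) = 0 → φ m (g i) = 0 := by
    intro i h0
    obtain ⟨k, hk, hmem⟩ := hspan (g i) (hg i)
    set L : M →ₗ[ℤ] Module.Dual ℤ M :=
      { toFun := fun m' => (Q m').flip (g i)
        map_add' := fun x y => by ext m''; simp
        map_smul' := fun c x => by ext m''; simp } with hL
    have hmem' : k • φ.flip (g i) ∈ LinearMap.range L := by
      rw [← Submodule.span_eq (LinearMap.range L), LinearMap.coe_range]
      exact hmem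
    obtain ⟨w, hw⟩ := hmem'
    have hw' : ∀ m'' : M, Q w m'' (g i) = k * φ m'' (g i) := by
      intro m''
      have := DFunLike.congr_fun hw m''
      simpa [hL, smul_eq_mul] using this
    have hwm : Q w m (g i) = 0 := by
      apply cs_zero (Q w w (g i))
      intro t
      have hp := hQpos (w + t • m) (g i) (hg i)
      have hs : Q m w (g i) = Q w m (g i) := by rw [hsymm m w]
      simp only [map_add, map_smul, LinearMap.add_apply, LinearMap.smul_apply,
        smul_eq_mul] at hp
      rw [hs, h0] at hp
      linarith
    have := hw' m
    rw [hwm] at this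
    rcases mul_eq_zero.mp this.symm with h | h
    · exact absurd h hk
    · exact h
  -- the bound constant
  set c : ℤ := ((Finset.univ.sup fun i : Fin r => (φ m (g i)).natAbs : ℕ) : ℤ) with hc
  have hci : ∀ i : Fin r, |φ m (g i)| ≤ c := by
    intro i
    rw [hc, ← Int.natCast_natAbs]
    exact_mod_cast Finset.le_sup (f := fun i : Fin r => (φ m (g i)).natAbs)
      (Finset.mem_univ i)
  have hc0 : 0 ≤ c := by positivity
  have hbound : ∀ i : Fin r, |φ m (g i)| ≤ c * Q m m (g i) := by
    intro i
    rcases eq_or_ne (Q m m (g i)) 0 with h0 | h0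
    · rw [key i h0, h0]; simp
    · have hq1 : 1 ≤ Q m m (g i) := lt_of_le_of_ne (hQpos m (g i) (hg i)) (Ne.symm h0)
      nlinarith [hci i, abs_nonneg (φ m (g i))]
  refine ⟨-(c • m), c • m, ?_, ?_⟩
  · intro n hn
    have h1 : ∀ i : Fin r, 0 ≤ (φ m - Q (-(c • m)) m) (g i) := by
      intro i
      have e : (φ m - Q (-(c • m)) m) (g i) = φ m (g i) + c * Q m m (g i) := by
        simp [sub_neg_eq_add]
      rw [e]
      have := abs_le.mp (hbound i)
      linarith
    have := nonneg_on_sat g τset hτ (φ m - Q (-(c • m)) m) h1 n hn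
    simp only [LinearMap.sub_apply, sub_nonneg] at this
    exact this
  · intro n hn
    have h1 : ∀ i : Fin r, 0 ≤ (Q (c • m) m - φ m) (g i) := by
      intro i
      have e : (Q (c • m) m - φ m) (g i) = c * Q m m (g i) - φ m (g i) := by
        simp
      rw [e]
      have := abs_le.mp (hbound i)
      linarith
    have := nonneg_on_sat g τset hτ (Q (c • m) m - φ m) h1 n hn
    simp only [LinearMap.sub_apply, sub_nonneg] at this
    exact this
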